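/- The regularized maximum is squeezed between the maximum and a shifted maximum: for every p ≥ 1, every η ∈ (0,∞)^p and every t ∈ ℝ^p, one has max{t_1,…,t_p} ≤ M_η(t_1,…,t_p) ≤ max{t_1+η_1,…,t_p+η_p}. -/

import Mathlib

open MeasureTheory

/-- **The regularized maximum is squeezed between the max and a shifted max.** -/
theorem regularized_max_squeeze
    (ρ : ℝ → ℝ)
    (hρ_smooth : ContDiff ℝ (⊤ : ℕ∞) ρ)
    (hρ_nonneg : ∀ x, 0 ≤ ρ x)
    (hρ_supp : Function.support ρ ⊆ Set.Icc (-1 : ℝ) 1)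
    (hρ_int : ∫ x : ℝ, ρ x = 1)
    (hρ_mean : ∫ x : ℝ, x * ρ x = 0)
    (p : ℕ) (hp : 1 ≤ p)
    (η : Fin p → ℝ) (hη : ∀ j, 0 < η j)
    (M : (Fin p → ℝ) → ℝ)
    (hM : ∀ t : Fin p → ℝ,
      M t = ∫ h : Fin p → ℝ,
        (⨆ j, (t j + h j)) * ∏ j, (η j)⁻¹ * ρ (h j / η j)) :
    ∀ t : Fin p → ℝ,
      (⨆ j, t j) ≤ M t ∧ M t ≤ ⨆ j, (t j + η j) := by
  haveI hne : Nonempty (Fin p) := ⟨⟨0, hp⟩⟩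
  have hρ_cont : Continuous ρ := hρ_smooth.continuous
  set g : Fin p → ℝ → ℝ := fun j x => (η j)⁻¹ * ρ (x / η j) with hgdef
  have hg_cont : ∀ j, Continuous (g j) := fun j =>
    continuous_const.mul (hρ_cont.comp (continuous_id.div_const _))
  have hg_nonneg : ∀ j x, 0 ≤ g j x := fun j x =>
    mul_nonneg (inv_nonneg.2 (hη j).le) (hρ_nonneg _)
  have hg_supp : ∀ j x, g j x ≠ 0 → x ∈ Set.Icc (-(η j)) (η j) := by
    intro j x hx
    have hρx : ρ (x / η j) ≠ 0 := by
      intro h0; exact hx (by simp [hgdef, h0])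
    have hmem : x / η j ∈ Set.Icc (-1 : ℝ) 1 := hρ_supp hρx
    constructor
    · have := (le_div_iff₀ (hη j)).mp hmem.1
      linarith
    · have := (div_le_one (hη j)).mp hmem.2
      exact this
  -- compact support of g j
  have hg_cs : ∀ j, HasCompactSupport (g j) := by
    intro j
    apply HasCompactSupport.intro (isCompact_Icc (a := -(η j)) (b := η j))
    intro x hx
    by_contra h0
    exact hx (hg_supp j x h0)
  have hg_integrable : ∀ j, Integrable (g j) := fun j =>
    (hg_cont j).integrable_of_hasCompactSupport (hg_cs j)
  -- ∫ g j = 1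
  have hg_int : ∀ j, ∫ x, g j x = 1 := by
    intro j
    have : ∫ x, g j x = (η j)⁻¹ * ∫ x, ρ (x / η j) := integral_const_mul _ _
    rw [this, MeasureTheory.Measure.integral_comp_div ρ (η j), hρ_int,
      abs_of_pos (hη j), smul_eq_mul, mul_one, inv_mul_cancel₀ (hη j).ne']
  -- ∫ x * g j x = 0
  have hg_mean : ∀ j, ∫ x, x * g j x = 0 := by
    intro j
    have heq : ∀ x, x * g j x = (fun y => y * ρ y) (x / η j) := by
      intro x
      simp only [hgdef]
      field_simp
    rw [show (fun x => x * g j x) = fun x => (fun y => y * ρ y) (x / η j) from funext heq]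
    rw [MeasureTheory.Measure.integral_comp_div (fun y => y * ρ y) (η j), hρ_mean, smul_zero]
  -- x * g j x is integrable (continuous, compact support)
  have hxg_integrable : ∀ j, Integrable (fun x => x * g j x) := by
    intro j
    apply Continuous.integrable_of_hasCompactSupport (continuous_id.mul (hg_cont j))
    exact (hg_cs j).mul_left
  -- kernel
  set K : (Fin p → ℝ) → ℝ := fun h => ∏ j, g j (h j) with hKdef
  have hK_cont : Continuous K := continuous_finset_prod _ fun j _ =>
    (hg_cont j).comp (continuous_apply j)
  have hK_nonneg : ∀ h, 0 ≤ K h := fun h => Finset.prod_nonneg fun j _ => hg_nonneg j (h j)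
  have hK_supp : ∀ h : Fin p → ℝ, K h ≠ 0 → ∀ j, h j ∈ Set.Icc (-(η j)) (η j) := by
    intro h hK j
    have := Finset.prod_ne_zero_iff.mp hK j (Finset.mem_univ j)
    exact hg_supp j (h j) this
  have hK_cs : HasCompactSupport K := by
    apply HasCompactSupport.intro (isCompact_univ_pi fun j => isCompact_Icc
      (a := -(η j)) (b := η j))
    intro h hh
    by_contra h0
    exact hh (Set.mem_univ_pi.mpr (hK_supp h h0))
  have hK_integrable : Integrable K :=
    hK_cont.integrable_of_hasCompactSupport hK_cs
  have hK_int : ∫ h, K h = 1 := by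
    rw [hKdef]
    rw [MeasureTheory.integral_fintype_prod_volume_eq_prod g]
    simp [hg_int]
  intro t
  have hbdd : ∀ s : Fin p → ℝ, BddAbove (Set.range s) := fun s =>
    (Set.finite_range s).bddAbove
  -- continuity of the sup
  have hsup_eq : ∀ s : Fin p → ℝ, ∀ h : Fin p → ℝ,
      (⨆ j, (s j + h j)) = Finset.univ.sup' Finset.univ_nonempty (fun j => s j + h j) :=
    fun s h => (Finset.sup'_univ_eq_ciSup _).symm
  have hS_cont : Continuous (fun h : Fin p → ℝ => ⨆ j, (t j + h j)) := by
    have : (fun h : Fin p → ℝ => ⨆ j, (t j + h j)) =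
        fun h => Finset.univ.sup' Finset.univ_nonempty (fun j => t j + h j) :=
      funext (hsup_eq t)
    rw [this]
    exact Continuous.finset_sup'_apply _ fun j _ =>
      continuous_const.add (continuous_apply j)
  -- integrand
  have hF_cont : Continuous (fun h : Fin p → ℝ => (⨆ j, (t j + h j)) * K h) :=
    hS_cont.mul hK_cont
  have hF_cs : HasCompactSupport (fun h : Fin p → ℝ => (⨆ j, (t j + h j)) * K h) :=
    hK_cs.mul_left
  have hF_integrable : Integrable (fun h : Fin p → ℝ => (⨆ j, (t j + h j)) * K h) :=
    hF_cont.integrable_of_hasCompactSupport hF_cs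
  constructor
  · -- lower bound
    obtain ⟨j₀, hj₀⟩ := Finite.exists_max t
    have hsup : (⨆ j, t j) = t j₀ :=
      le_antisymm (ciSup_le hj₀) (le_ciSup (hbdd t) j₀)
    set f : Fin p → ℝ → ℝ := fun j x => if j = j₀ then (t j₀ + x) * g j x else g j x with hfdef
    have hkey : ∀ h : Fin p → ℝ, (t j₀ + h j₀) * K h = ∏ j, f j (h j) := by
      intro h
      simp only [hKdef]
      rw [← Finset.mul_prod_erase Finset.univ (fun j => g j (h j)) (Finset.mem_univ j₀),
        ← Finset.mul_prod_erase Finset.univ (fun j => f j (h j)) (Finset.mem_univ j₀)]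
      have h1 : f j₀ (h j₀) = (t j₀ + h j₀) * g j₀ (h j₀) := by simp [hfdef]
      have h2 : ∀ j ∈ Finset.univ.erase j₀, f j (h j) = g j (h j) := by
        intro j hj
        simp [hfdef, (Finset.mem_erase.mp hj).1]
      rw [h1, Finset.prod_congr rfl h2]
      ring
    have hf_int : ∀ j, ∫ x, f j x = if j = j₀ then t j₀ else 1 := by
      intro j
      by_cases hj : j = j₀
      · subst hj
        simp only [hfdef, if_pos rfl]
        have : ∀ x : ℝ, (t j + x) * g j x = t j * g j x + x * g j x := fun x => by ring
        rw [show (fun x => (t j + x) * g j x) = fun x => t j * g j x + x * g j x from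
          funext this]
        rw [integral_add ((hg_integrable j).const_mul _) (hxg_integrable j),
          integral_const_mul, hg_int j, hg_mean j, mul_one, add_zero]
        simp
      · simp only [hfdef, if_neg hj]
        rw [hg_int j]
    have hG_int : ∫ h : Fin p → ℝ, (t j₀ + h j₀) * K h = t j₀ := by
      rw [show (fun h : Fin p → ℝ => (t j₀ + h j₀) * K h) = fun h => ∏ j, f j (h j) from
        funext hkey]
      rw [MeasureTheory.integral_fintype_prod_volume_eq_prod f]
      rw [Finset.prod_congr rfl fun j _ => hf_int j]
      rw [Finset.prod_ite_eq' Finset.univ j₀ (fun _ => t j₀)]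
      simp
    have hG_integrable : Integrable (fun h : Fin p → ℝ => (t j₀ + h j₀) * K h) := by
      apply Continuous.integrable_of_hasCompactSupport
      · exact (continuous_const.add (continuous_apply j₀)).mul hK_cont
      · exact hK_cs.mul_left
    have hmono : ∀ h : Fin p → ℝ, (t j₀ + h j₀) * K h ≤ (⨆ j, (t j + h j)) * K h := by
      intro h
      apply mul_le_mul_of_nonneg_right _ (hK_nonneg h)
      exact le_ciSup (f := fun j => t j + h j) (hbdd _) j₀
    rw [hsup, hM t, ← hG_int]
    exact integral_mono hG_integrable hF_integrable hmono
  · -- upper bound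
    set C : ℝ := ⨆ j, (t j + η j) with hCdef
    have hmono : ∀ h : Fin p → ℝ, (⨆ j, (t j + h j)) * K h ≤ C * K h := by
      intro h
      by_cases hK0 : K h = 0
      · simp [hK0]
      · apply mul_le_mul_of_nonneg_right _ (hK_nonneg h)
        apply ciSup_le
        intro j
        have hj := (hK_supp h hK0 j).2
        calc t j + h j ≤ t j + η j := by linarith
          _ ≤ C := le_ciSup (f := fun j => t j + η j) (hbdd _) j
    rw [hM t]
    calc (∫ h : Fin p → ℝ, (⨆ j, (t j + h j)) * K h)
        ≤ ∫ h : Fin p → ℝ, C * K h :=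
          integral_mono hF_integrable (hK_integrable.const_mul C) hmono
      _ = C * ∫ h, K h := integral_const_mul _ _
      _ = C := by rw [hK_int, mul_one]
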